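/- arXiv:0804.4223 — 9 statements merged into one kernel-verified Lean document; each statement's English description precedes it below -/
import Mathlib

section
/- Let A be a 2×2 integer matrix with determinant 1 whose trace t lies in {−1, 0, 1}. Then there exists P ∈ GL(2, ℤ) (an invertible integer matrix whose inverse also has integer entries) such that P⁻¹AP equals [[0,1],[−1,−1]] if t = −1, equals [[0,1],[−1,0]] if t = 0, and equals [[0,1],[−1,1]] if t = 1. -/
/-- Balanced remainder: for `a > 0` we can shift `b` by a multiple of `2*a` into `[-a, a]`. -/
lemma balanced (a b : ℤ) (ha : 0 < a) : ∃ k : ℤ, |b + 2 * a * k| ≤ a := by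
  have h2a : (0:ℤ) < 2 * a := by linarith
  have hr0 : 0 ≤ b % (2 * a) := Int.emod_nonneg b (by linarith)
  have hr1 : b % (2 * a) < 2 * a := Int.emod_lt_of_pos b h2a
  by_cases h : b % (2 * a) ≤ a
  · refine ⟨-(b / (2 * a)), ?_⟩
    have e1 : b + 2 * a * (-(b / (2 * a))) = b % (2 * a) := by
      rw [mul_neg]; linarith [Int.mul_ediv_add_emod b (2 * a)]
    rw [e1, abs_of_nonneg hr0]; exact h
  · refine ⟨-(b / (2 * a)) - 1, ?_⟩
    have e2 : b + 2 * a * (-(b / (2 * a)) - 1) = b % (2 * a) - 2 * a := by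
      rw [mul_sub, mul_neg, mul_one]; linarith [Int.mul_ediv_add_emod b (2 * a)]
    rw [e2, abs_le]
    omega

lemma balanced' (α b : ℤ) (hα : α ≠ 0) : ∃ k : ℤ, |b + 2 * α * k| ≤ |α| := by
  rcases lt_or_gt_of_ne hα with h | h
  · obtain ⟨k, hk⟩ := balanced (-α) b (by linarith)
    refine ⟨-k, ?_⟩
    rw [abs_of_neg h, show b + 2 * α * (-k) = b + 2 * (-α) * k from by ring]
    exact hk
  · obtain ⟨k, hk⟩ := balanced α b h
    exact ⟨k, by rwa [abs_of_pos h]⟩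

/-- A binary quadratic form of discriminant `-3` or `-4` represents `1` or `-1`. -/
lemma rep : ∀ n : ℕ, ∀ α β γ : ℤ, α.natAbs ≤ n →
    (β^2 - 4*α*γ = -3 ∨ β^2 - 4*α*γ = -4) →
    ∃ x y : ℤ, (α*x^2 + β*x*y + γ*y^2)^2 = 1 := by
  intro n
  induction n with
  | zero =>
    intro α β γ hle hd
    have : α = 0 := by omega
    subst this
    rcases hd with hd | hd <;> nlinarith [sq_nonneg β]
  | succ n IH =>
    intro α β γ hle hd
    by_cases hα : α = 0
    · subst hα; rcases hd with hd | hd <;> nlinarith [sq_nonneg β]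
    obtain ⟨k, hk⟩ := balanced' α β hα
    by_cases h1 : α.natAbs = 1
    · rcases Int.natAbs_eq_iff.mp h1 with h | h <;>
        exact ⟨1, 0, by subst h; norm_num⟩
    · have h2 : 2 ≤ α.natAbs := by omega
      have habs : (2:ℤ) ≤ |α| := by
        rw [Int.abs_eq_natAbs]; exact_mod_cast h2
      have hβα : (β + 2*α*k)^2 ≤ α^2 := by
        have := pow_le_pow_left₀ (abs_nonneg (β + 2*α*k)) hk 2
        rwa [sq_abs, sq_abs] at this
      have hdisc : (β + 2*α*k)^2 - 4*(α*k^2 + β*k + γ)*α = β^2 - 4*α*γ := by ring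
      have hpos : 0 < α * (α*k^2 + β*k + γ) := by rcases hd with hd | hd <;> nlinarith
      have hbound : 4 * (α * (α*k^2 + β*k + γ)) ≤ α^2 + 4 := by
        rcases hd with hd | hd <;> nlinarith
      have hlt : |α*k^2 + β*k + γ| < |α| := by
        have hag : α * (α*k^2 + β*k + γ) = |α| * |α*k^2 + β*k + γ| := by
          rw [← abs_mul, abs_of_pos hpos]
        have hα2 : α^2 = |α| * |α| := by rw [← abs_mul, abs_of_nonneg (mul_self_nonneg α), sq]
        nlinarith [abs_nonneg (α*k^2 + β*k + γ), abs_nonneg α]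
      have hnat : (α*k^2 + β*k + γ).natAbs ≤ n := by
        have : (α*k^2 + β*k + γ).natAbs < α.natAbs := by
          rw [Int.abs_eq_natAbs, Int.abs_eq_natAbs] at hlt; exact_mod_cast hlt
        omega
      obtain ⟨x, y, hxy⟩ := IH (α*k^2 + β*k + γ) (β + 2*α*k) α hnat (by rw [hdisc]; exact hd)
      exact ⟨y + k * x, x, by linear_combination hxy⟩

lemma key (A : Matrix (Fin 2) (Fin 2) ℤ) (hdet : A.det = 1) (t : ℤ)
    (ht : A.trace = t) (hd : t^2 - 4 = -3 ∨ t^2 - 4 = -4) :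
    ∃ P : GL (Fin 2) ℤ,
      (↑P⁻¹ : Matrix (Fin 2) (Fin 2) ℤ) * A * (↑P : Matrix (Fin 2) (Fin 2) ℤ) = !![0, 1; -1, t] := by
  obtain ⟨a, b, c, d, hA⟩ : ∃ a b c d : ℤ, A = !![a, b; c, d] :=
    ⟨_, _, _, _, (Matrix.etaExpand_eq A).symm⟩
  subst hA
  rw [Matrix.det_fin_two] at hdet
  rw [Matrix.trace_fin_two] at ht
  simp [Matrix.cons_val_zero, Matrix.cons_val_one] at hdet ht
  obtain ⟨x, y, hε⟩ := rep c.natAbs c (d - a) (-b) le_rfl (by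
    have h5 : (d-a)^2 - 4*c*(-b) = t^2 - 4 := by linear_combination (a + d + t) * ht - 4 * hdet
    rw [h5]; exact hd)
  have hε' : (c*x^2 + (d-a)*x*y - b*y^2)^2 = 1 := by linear_combination hε
  set e : ℤ := c*x^2 + (d-a)*x*y - b*y^2 with he
  set P : Matrix (Fin 2) (Fin 2) ℤ := !![x, -(a*x+b*y); y, -(c*x+d*y)] with hP
  set Q : Matrix (Fin 2) (Fin 2) ℤ := !![e*(c*x+d*y), -(e*(a*x+b*y)); e*y, -(e*x)] with hQ
  have h1 : P * Q = 1 := by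
    rw [hP, hQ, he]
    ext i j
    fin_cases i <;> fin_cases j <;>
      simp [Matrix.mul_apply, Fin.sum_univ_succ, Matrix.one_apply] <;>
      first
        | linear_combination hε'
        | ring
  have h2 : Q * P = 1 := by
    rw [hP, hQ, he]
    ext i j
    fin_cases i <;> fin_cases j <;>
      simp [Matrix.mul_apply, Fin.sum_univ_succ, Matrix.one_apply] <;>
      first
        | linear_combination hε'
        | ring
  refine ⟨⟨P, Q, h1, h2⟩, ?_⟩
  have hAP : !![a, b; c, d] * P = P * !![0, 1; -1, t] := by
    rw [hP]
    ext i j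
    fin_cases i <;> fin_cases j <;>
      simp [Matrix.mul_apply, Fin.sum_univ_succ]
    · linear_combination x*hdet - (x*a+y*b)*ht
    · linear_combination y*hdet - (x*c+y*d)*ht
  show Q * !![a, b; c, d] * P = !![0, 1; -1, t]
  rw [mul_assoc, hAP, ← mul_assoc, h2, one_mul]

/-- A matrix `A ∈ SL(2, ℤ)` with trace in `{-1, 0, 1}` is conjugate, by a
matrix `P ∈ GL(2, ℤ)`, to `[[0,1],[-1,-1]]`, `[[0,1],[-1,0]]`, or `[[0,1],[-1,1]]`, according
as the trace is `-1`, `0`, or `1`. -/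
theorem stmt2 (A : Matrix (Fin 2) (Fin 2) ℤ) (hdet : A.det = 1)
    (htr : A.trace ∈ ({-1, 0, 1} : Set ℤ)) :
    ∃ P : GL (Fin 2) ℤ,
      (A.trace = -1 → (↑P⁻¹ : Matrix (Fin 2) (Fin 2) ℤ) * A * (↑P : Matrix (Fin 2) (Fin 2) ℤ) = !![0, 1; -1, -1]) ∧
      (A.trace = 0 → (↑P⁻¹ : Matrix (Fin 2) (Fin 2) ℤ) * A * (↑P : Matrix (Fin 2) (Fin 2) ℤ) = !![0, 1; -1, 0]) ∧
      (A.trace = 1 → (↑P⁻¹ : Matrix (Fin 2) (Fin 2) ℤ) * A * (↑P : Matrix (Fin 2) (Fin 2) ℤ) = !![0, 1; -1, 1]) := by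
  rcases htr with h | h | h
  · obtain ⟨P, hP⟩ := key A hdet (-1) h (by norm_num)
    exact ⟨P, fun _ => hP, fun h0 => absurd (h.symm.trans h0) (by norm_num),
      fun h0 => absurd (h.symm.trans h0) (by norm_num)⟩
  · obtain ⟨P, hP⟩ := key A hdet 0 h (by norm_num)
    exact ⟨P, fun h0 => absurd (h.symm.trans h0) (by norm_num), fun _ => hP,
      fun h0 => absurd (h.symm.trans h0) (by norm_num)⟩
  · obtain ⟨P, hP⟩ := key A hdet 1 h (by norm_num)
    exact ⟨P, fun h0 => absurd (h.symm.trans h0) (by norm_num),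
      fun h0 => absurd (h.symm.trans h0) (by norm_num), fun _ => hP⟩
end

section
/- For every nonzero integer n: (i) the center of Λ_n is exactly the subgroup {((x, 0), 0) : x ∈ ℤ}, which is infinite cyclic; (ii) the quotient of Λ_n by its center is isomorphic to ℤ²; and (iii) this central extension does not split, i.e., there is no group homomorphism s from Λ_n / Z(Λ_n) to Λ_n with π ∘ s = id, where π : Λ_n → Λ_n / Z(Λ_n) is the quotient map. -/
/-- The automorphism `A_n = [[1,n],[0,1]]` of `ℤ²`, i.e. `A_n(x, y) = (x + n y, y)`. -/
def AnAut (n : ℤ) : (ℤ × ℤ) ≃+ (ℤ × ℤ) where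
  toFun p := (p.1 + n * p.2, p.2)
  invFun p := (p.1 - n * p.2, p.2)
  left_inv p := by simp
  right_inv p := by simp
  map_add' p q := by ext <;> simp <;> ring

/-- The action `φ : ℤ → Aut(ℤ²)`, `φ(k) = A_nᵏ` (written multiplicatively). -/
def phiN (n : ℤ) : Multiplicative ℤ →* MulAut (Multiplicative (ℤ × ℤ)) :=
  zpowersHom _ (AddEquiv.toMultiplicative (AnAut n))

/-- The group `Λ_n = ℤ² ⋊_φ ℤ`, with `((x,y),k)·((x',y'),k') = ((x,y) + A_nᵏ(x',y'), k+k')`. -/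
abbrev Lambda (n : ℤ) : Type :=
  Multiplicative (ℤ × ℤ) ⋊[phiN n] Multiplicative ℤ

lemma phiN_apply (n k : ℤ) (a : ℤ × ℤ) :
    (phiN n (Multiplicative.ofAdd k)) (Multiplicative.ofAdd a)
      = Multiplicative.ofAdd (a.1 + n * k * a.2, a.2) := by
  show ((AddEquiv.toMultiplicative (AnAut n)) ^ k) (Multiplicative.ofAdd a) = _
  induction k using Int.induction_on generalizing a with
  | zero => simp
  | succ k ih =>
      rw [zpow_add, zpow_one, MulAut.mul_apply]
      have h1 : (AddEquiv.toMultiplicative (AnAut n)) (Multiplicative.ofAdd a)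
          = Multiplicative.ofAdd (a.1 + n * a.2, a.2) := rfl
      rw [h1, ih]
      simp; ring
  | pred k ih =>
      rw [sub_eq_add_neg, zpow_add, MulAut.mul_apply]
      have h1 : ((AddEquiv.toMultiplicative (AnAut n)) ^ (-1 : ℤ)) (Multiplicative.ofAdd a)
          = Multiplicative.ofAdd (a.1 - n * a.2, a.2) := rfl
      rw [h1, ih]
      simp; ring

lemma Lambda.mul_def (n : ℤ) (a b : ℤ × ℤ) (k l : ℤ) :
    ((⟨.ofAdd a, .ofAdd k⟩ : Lambda n) * ⟨.ofAdd b, .ofAdd l⟩)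
      = ⟨.ofAdd (a.1 + b.1 + n * k * b.2, a.2 + b.2), .ofAdd (k + l)⟩ := by
  ext : 1
  · show (Multiplicative.ofAdd a * (phiN n (.ofAdd k)) (.ofAdd b)) = _
    rw [phiN_apply, ← ofAdd_add]
    congr 1
    simp [Prod.ext_iff]; ring
  · show Multiplicative.ofAdd k * Multiplicative.ofAdd l = _
    rw [← ofAdd_add]

lemma Lambda.mk_eq_iff (a b : ℤ × ℤ) (k l : ℤ) {n : ℤ} :
    (⟨.ofAdd a, .ofAdd k⟩ : Lambda n) = ⟨.ofAdd b, .ofAdd l⟩ ↔ a = b ∧ k = l := by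
  constructor
  · intro h
    exact ⟨congrArg (fun g : Lambda n => (SemidirectProduct.left g).toAdd) h,
      congrArg (fun g : Lambda n => (SemidirectProduct.right g).toAdd) h⟩
  · rintro ⟨rfl, rfl⟩; rfl

lemma center_eq (n : ℤ) (hn : n ≠ 0) :
    ((Subgroup.center (Lambda n) : Set (Lambda n)) =
        Set.range fun x : ℤ =>
          (SemidirectProduct.inl (Multiplicative.ofAdd (x, 0)) : Lambda n)) := by
  ext g
  simp only [SetLike.mem_coe, Subgroup.mem_center_iff, Set.mem_range]
  constructor
  · intro h
    obtain ⟨a, k⟩ := g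
    rw [show a = Multiplicative.ofAdd a.toAdd from rfl,
        show k = Multiplicative.ofAdd k.toAdd from rfl] at h ⊢
    set x := a.toAdd.1
    set y := a.toAdd.2
    have h1 := h ⟨.ofAdd (0, 1), .ofAdd 0⟩
    have h2 := h ⟨.ofAdd (0, 0), .ofAdd 1⟩
    rw [show a.toAdd = (x, y) from rfl, Lambda.mul_def, Lambda.mul_def, Lambda.mk_eq_iff] at h1 h2
    simp [Prod.ext_iff] at h1 h2
    have hy : y = 0 := h2.1.resolve_left hn
    have hk : k = 1 := h1.1.resolve_left hn
    refine ⟨x, ?_⟩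
    have : SemidirectProduct.inl (Multiplicative.ofAdd ((x, 0) : ℤ × ℤ))
        = (⟨.ofAdd (x, 0), .ofAdd 0⟩ : Lambda n) := rfl
    rw [this, Lambda.mk_eq_iff]
    refine ⟨?_, by rw [hk]; rfl⟩
    rw [show a.toAdd = (x, y) from rfl, hy]
  · rintro ⟨x, rfl⟩ g
    obtain ⟨b, l⟩ := g
    rw [show b = Multiplicative.ofAdd b.toAdd from rfl,
        show l = Multiplicative.ofAdd l.toAdd from rfl]
    rw [show (SemidirectProduct.inl (Multiplicative.ofAdd ((x, 0) : ℤ × ℤ)) : Lambda n)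
        = ⟨.ofAdd (x, 0), .ofAdd 0⟩ from rfl]
    rw [Lambda.mul_def, Lambda.mul_def, Lambda.mk_eq_iff]
    simp [Prod.ext_iff]; ring

/-- The projection `Λ_n → ℤ²`, `((x,y),k) ↦ (y,k)`. -/
def projHom (n : ℤ) : Lambda n →* Multiplicative (ℤ × ℤ) :=
  MonoidHom.mk' (fun g => .ofAdd ((Multiplicative.toAdd g.left).2, Multiplicative.toAdd g.right))
    (by
      intro a b
      have h : (phiN n a.right) b.left
          = .ofAdd ((Multiplicative.toAdd b.left).1
              + n * (Multiplicative.toAdd a.right) * (Multiplicative.toAdd b.left).2,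
              (Multiplicative.toAdd b.left).2) :=
        phiN_apply n (Multiplicative.toAdd a.right) (Multiplicative.toAdd b.left)
      show Multiplicative.ofAdd ((Multiplicative.toAdd (a.left * (phiN n a.right) b.left)).2,
          Multiplicative.toAdd (a.right * b.right)) = _
      rw [h, ← ofAdd_add]
      rfl)

lemma projHom_surjective (n : ℤ) : Function.Surjective (projHom n) :=
  fun p => ⟨⟨.ofAdd (0, (Multiplicative.toAdd p).1), .ofAdd (Multiplicative.toAdd p).2⟩, rfl⟩

lemma projHom_ker (n : ℤ) (hn : n ≠ 0) : (projHom n).ker = Subgroup.center (Lambda n) := by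
  ext g
  rw [MonoidHom.mem_ker, ← SetLike.mem_coe, center_eq n hn, Set.mem_range]
  constructor
  · intro h
    obtain ⟨a, k⟩ := g
    have h1 : ((Multiplicative.toAdd a).2, Multiplicative.toAdd k) = ((0 : ℤ), (0 : ℤ)) :=
      congrArg Multiplicative.toAdd h
    refine ⟨(Multiplicative.toAdd a).1, ?_⟩
    rw [show (SemidirectProduct.inl (Multiplicative.ofAdd (((Multiplicative.toAdd a).1, 0) : ℤ × ℤ)) : Lambda n)
        = ⟨.ofAdd ((Multiplicative.toAdd a).1, 0), .ofAdd 0⟩ from rfl,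
      show (⟨a, k⟩ : Lambda n) = ⟨.ofAdd (Multiplicative.toAdd a), .ofAdd (Multiplicative.toAdd k)⟩ from rfl,
      Lambda.mk_eq_iff]
    have h2 := congrArg Prod.fst h1
    have h3 := congrArg Prod.snd h1
    simp at h2 h3
    exact ⟨by rw [show (Multiplicative.toAdd a) = ((Multiplicative.toAdd a).1, (Multiplicative.toAdd a).2) from rfl, h2], h3.symm⟩
  · rintro ⟨x, rfl⟩
    rfl

/-- The injection `ℤ → Λ_n`, `x ↦ ((x,0),0)`. -/
def centerHom (n : ℤ) : Multiplicative ℤ →* Lambda n :=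
  SemidirectProduct.inl.comp (AddMonoidHom.toMultiplicative (AddMonoidHom.inl ℤ ℤ))

lemma centerHom_injective (n : ℤ) : Function.Injective (centerHom n) := by
  intro x y h
  exact congrArg (fun g : Lambda n => (Multiplicative.toAdd (SemidirectProduct.left g)).1) h

lemma centerHom_range (n : ℤ) (hn : n ≠ 0) :
    (centerHom n).range = Subgroup.center (Lambda n) := by
  apply Subgroup.ext
  intro g
  rw [← SetLike.mem_coe, ← SetLike.mem_coe, center_eq n hn]
  rfl

noncomputable def centerIso (n : ℤ) (hn : n ≠ 0) :
    Subgroup.center (Lambda n) ≃* Multiplicative ℤ :=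
  ((MulEquiv.subgroupCongr (centerHom_range n hn)).symm.trans
    (MonoidHom.ofInjective (centerHom_injective n)).symm)

noncomputable def quotIso (n : ℤ) (hn : n ≠ 0) :
    (Lambda n ⧸ Subgroup.center (Lambda n)) ≃* Multiplicative (ℤ × ℤ) :=
  (QuotientGroup.quotientMulEquivOfEq (projHom_ker n hn).symm).trans
    (QuotientGroup.quotientKerEquivOfSurjective (projHom n) (projHom_surjective n))

lemma not_comm (n : ℤ) (hn : n ≠ 0) :
    ¬ ∀ g h : Lambda n, g * h = h * g := by
  intro H
  have := H ⟨.ofAdd ((0, 0) : ℤ × ℤ), .ofAdd 1⟩ ⟨.ofAdd ((0, 1) : ℤ × ℤ), .ofAdd 0⟩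
  rw [Lambda.mul_def, Lambda.mul_def, Lambda.mk_eq_iff] at this
  have h2 := congrArg Prod.fst this.1
  simp at h2
  exact hn h2

/-- For every nonzero integer `n`:
(i) the center of `Λ_n` is exactly `{((x,0),0) : x ∈ ℤ}` and is infinite cyclic (isomorphic
to `ℤ`); (ii) `Λ_n` modulo its center is isomorphic to `ℤ²`; (iii) the central extension does
not split: there is no homomorphism `s : Λ_n/Z(Λ_n) →* Λ_n` with `π ∘ s = id`. -/
theorem stmt7 (n : ℤ) (hn : n ≠ 0) :
    ((Subgroup.center (Lambda n) : Set (Lambda n)) =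
        Set.range fun x : ℤ =>
          (SemidirectProduct.inl (Multiplicative.ofAdd (x, 0)) : Lambda n)) ∧
    Nonempty (Subgroup.center (Lambda n) ≃* Multiplicative ℤ) ∧
    Nonempty ((Lambda n ⧸ Subgroup.center (Lambda n)) ≃* Multiplicative (ℤ × ℤ)) ∧
    ¬ ∃ s : (Lambda n ⧸ Subgroup.center (Lambda n)) →* Lambda n,
        (QuotientGroup.mk' (Subgroup.center (Lambda n))).comp s =
          MonoidHom.id (Lambda n ⧸ Subgroup.center (Lambda n)) := by
  refine ⟨center_eq n hn, ⟨centerIso n hn⟩, ⟨quotIso n hn⟩, ?_⟩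
  rintro ⟨s, hs⟩
  set Z := Subgroup.center (Lambda n)
  set π := QuotientGroup.mk' Z with hπ
  have hsec : ∀ q, π (s q) = q := fun q => DFunLike.congr_fun hs q
  have hz : ∀ g : Lambda n, g * (s (π g))⁻¹ ∈ Z := by
    intro g
    have : π (g * (s (π g))⁻¹) = 1 := by
      rw [map_mul, map_inv, hsec, mul_inv_cancel]
    rwa [← MonoidHom.mem_ker, QuotientGroup.ker_mk'] at this
  have hquot_comm : ∀ p q : Lambda n ⧸ Z, p * q = q * p := by
    intro p q
    apply (quotIso n hn).injective
    rw [map_mul, map_mul, mul_comm]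
  apply not_comm n hn
  intro g h
  set pg := π g with hpg
  set ph := π h with hph
  have hg : g = (g * (s pg)⁻¹) * s pg := by group
  have hh : h = (h * (s ph)⁻¹) * s ph := by group
  set zg := g * (s pg)⁻¹ with hzgdef
  set zh := h * (s ph)⁻¹ with hzhdef
  have hcg : ∀ b : Lambda n, b * zg = zg * b := Subgroup.mem_center_iff.mp (hz g)
  have hch : ∀ b : Lambda n, b * zh = zh * b := Subgroup.mem_center_iff.mp (hz h)
  have hss : s pg * s ph = s ph * s pg := by
    rw [← map_mul, hquot_comm, map_mul]
  have hzz : zg * zh = zh * zg := hch zg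
  conv_lhs => rw [hg, hh]
  conv_rhs => rw [hg, hh]
  calc (zg * s pg) * (zh * s ph)
      = zg * (s pg * zh) * s ph := by group
    _ = zg * (zh * s pg) * s ph := by rw [hch]
    _ = zg * zh * (s pg * s ph) := by group
    _ = zh * zg * (s ph * s pg) := by rw [hzz, hss]
    _ = zh * (zg * s ph) * s pg := by group
    _ = zh * (s ph * zg) * s pg := by rw [← hcg]
    _ = (zh * s ph) * (zg * s pg) := by group
end

section
/- Let Γ be a group containing a normal subgroup N with N isomorphic to ℤ and Γ/N isomorphic to ℤ³. Then Γ contains a normal subgroup M with M isomorphic to ℤ × ℤ and Γ/M isomorphic to ℤ × ℤ. -/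
private def swap12Z : (ℤ × ℤ × ℤ) ≃+ (ℤ × ℤ × ℤ) where
  toFun p := (p.2.1, p.1, p.2.2)
  invFun p := (p.2.1, p.1, p.2.2)
  left_inv p := rfl
  right_inv p := rfl
  map_add' p q := rfl

private def shearZ : (ℤ × ℤ × ℤ) ≃+ (ℤ × ℤ × ℤ) where
  toFun p := (p.1, p.1 + p.2.1, p.2.2)
  invFun p := (p.1, p.2.1 - p.1, p.2.2)
  left_inv p := by ext <;> simp
  right_inv p := by ext <;> simp
  map_add' p q := by ext <;> simp <;> ring

private lemma key_lemma {Γ : Type*} [Group Γ] {N : Subgroup Γ}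
    (n₀ : N) (hgen : ∀ n : N, ∃ j : ℤ, n = n₀ ^ j)
    (hord : ∀ j : ℤ, (n₀ : Γ) ^ j = 1 → j = 0)
    (q : Γ →* Multiplicative (ℤ × ℤ × ℤ)) (hqs : Function.Surjective q)
    (hker : ∀ m, q m = 1 ↔ m ∈ N)
    (t : Γ) (hqt : q t = Multiplicative.ofAdd (1, 0, 0))
    (hc : Commute (↑n₀ : Γ) t) :
    ∃ M : Subgroup Γ, M.Normal ∧ Nonempty (M ≃* Multiplicative (ℤ × ℤ)) ∧
      ∃ f : Γ →* Multiplicative (ℤ × ℤ), Function.Surjective f ∧ f.ker = M := by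
  classical
  set π : Multiplicative (ℤ × ℤ × ℤ) →* Multiplicative (ℤ × ℤ) :=
    AddMonoidHom.toMultiplicative (AddMonoidHom.snd ℤ (ℤ × ℤ)) with hπ
  have hπapp : ∀ x : Multiplicative (ℤ × ℤ × ℤ),
      π x = Multiplicative.ofAdd (Multiplicative.toAdd x).2 := fun _ => rfl
  set f : Γ →* Multiplicative (ℤ × ℤ) := π.comp q with hf
  have hπs : Function.Surjective π := by
    intro p
    exact ⟨Multiplicative.ofAdd (0, Multiplicative.toAdd p), by simp [hπapp]⟩
  have hfs : Function.Surjective f := hπs.comp hqs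
  have hqt' : ∀ k : ℤ, q (t ^ k) = Multiplicative.ofAdd ((k : ℤ), (0 : ℤ), (0 : ℤ)) := by
    intro k
    rw [map_zpow, hqt, ← ofAdd_zsmul]
    congr 1
    simp [Prod.smul_def]
  have hqn : ∀ j : ℤ, q ((n₀ : Γ) ^ j) = 1 := by
    intro j
    rw [map_zpow, (hker _).mpr n₀.2, one_zpow]
  -- the homomorphism ℤ × ℤ → Γ
  set h : Multiplicative (ℤ × ℤ) →* Γ := MonoidHom.mk'
    (fun p => (n₀ : Γ) ^ (Multiplicative.toAdd p).1 * t ^ (Multiplicative.toAdd p).2)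
    (by
      intro p p'
      show (n₀ : Γ) ^ ((Multiplicative.toAdd p) + (Multiplicative.toAdd p')).1
          * t ^ ((Multiplicative.toAdd p) + (Multiplicative.toAdd p')).2 = _
      show _ = ((n₀ : Γ) ^ (Multiplicative.toAdd p).1 * t ^ (Multiplicative.toAdd p).2)
          * ((n₀ : Γ) ^ (Multiplicative.toAdd p').1 * t ^ (Multiplicative.toAdd p').2)
      rw [Prod.fst_add, Prod.snd_add, zpow_add, zpow_add]
      exact (hc.zpow_zpow (Multiplicative.toAdd p').1
        (Multiplicative.toAdd p).2).mul_mul_mul_comm _ _) with hh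
  have happ : ∀ p, h p = (n₀ : Γ) ^ (Multiplicative.toAdd p).1
      * t ^ (Multiplicative.toAdd p).2 := fun _ => rfl
  have hinj : Function.Injective h := by
    rw [injective_iff_map_eq_one]
    intro p hp
    rw [happ] at hp
    set a := (Multiplicative.toAdd p).1
    set b := (Multiplicative.toAdd p).2
    have hqp : q ((n₀ : Γ) ^ a * t ^ b) = 1 := by rw [hp, map_one]
    rw [map_mul, hqn, one_mul, hqt'] at hqp
    have hb : b = 0 := by
      have := congrArg (fun x => (Multiplicative.toAdd x).1) hqp
      simpa using this
    have ha : a = 0 := by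
      apply hord
      rw [hb, zpow_zero, mul_one] at hp
      exact hp
    exact Multiplicative.toAdd.injective (Prod.ext ha hb)
  have hrange : h.range = f.ker := by
    ext m
    constructor
    · rintro ⟨p, rfl⟩
      rw [MonoidHom.mem_ker, happ]
      rw [hf, MonoidHom.comp_apply, map_mul, hqn, one_mul, hqt', hπapp]
      simp
    · intro hm
      rw [MonoidHom.mem_ker] at hm
      set w := Multiplicative.toAdd (q m) with hw
      have hw2 : w.2 = 0 := by
        have : f m = Multiplicative.ofAdd w.2 := by rw [hf, MonoidHom.comp_apply, hπapp]
        rw [hm] at this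
        simpa using this.symm
      have hqm1 : q (m * (t ^ w.1)⁻¹) = 1 := by
        have hqm : q m = Multiplicative.ofAdd w := rfl
        rw [map_mul, map_inv, hqt', hqm, ← ofAdd_neg, ← ofAdd_add]
        have hz : w + -((w.1 : ℤ), (0 : ℤ), (0 : ℤ)) = 0 := by
          have h21 : w.2.1 = 0 := by rw [hw2]; rfl
          have h22 : w.2.2 = 0 := by rw [hw2]; rfl
          ext <;> simp [h21, h22]
        rw [hz, ofAdd_zero]
      obtain ⟨n, hn⟩ : ∃ n : N, (n : Γ) = m * (t ^ w.1)⁻¹ :=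
        ⟨⟨_, (hker _).mp hqm1⟩, rfl⟩
      obtain ⟨j, hj⟩ := hgen n
      refine ⟨Multiplicative.ofAdd (j, w.1), ?_⟩
      rw [happ]
      have : (n : Γ) = (n₀ : Γ) ^ j := by
        exact_mod_cast congrArg (fun x : N => (x : Γ)) hj
      rw [show (Multiplicative.toAdd (Multiplicative.ofAdd (j, w.1))) = (j, w.1) from rfl]
      rw [← this, hn]
      group
  refine ⟨f.ker, MonoidHom.normal_ker f,
    ⟨(MulEquiv.subgroupCongr hrange.symm).trans (MonoidHom.ofInjective hinj).symm⟩,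
    f, hfs, rfl⟩

/-- If a group `Γ` has a normal subgroup `N ≅ ℤ` with `Γ/N ≅ ℤ³`, then `Γ`
has a normal subgroup `M ≅ ℤ × ℤ` with `Γ/M ≅ ℤ × ℤ` (the quotient `Γ/M ≅ ℤ × ℤ` being
expressed by a surjective homomorphism onto `ℤ × ℤ` with kernel `M`). -/
theorem stmt8 (Γ : Type*) [Group Γ] (N : Subgroup Γ) [N.Normal]
    (hN : Nonempty (N ≃* Multiplicative ℤ))
    (hQ : Nonempty ((Γ ⧸ N) ≃* Multiplicative (ℤ × ℤ × ℤ))) :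
    ∃ M : Subgroup Γ, M.Normal ∧ Nonempty (M ≃* Multiplicative (ℤ × ℤ)) ∧
      ∃ f : Γ →* Multiplicative (ℤ × ℤ), Function.Surjective f ∧ f.ker = M := by
  classical
  obtain ⟨φ⟩ := hN
  obtain ⟨ψ⟩ := hQ
  set n₀ : N := φ.symm (Multiplicative.ofAdd 1) with hn₀
  have hφn₀ : φ n₀ = Multiplicative.ofAdd 1 := φ.apply_symm_apply _
  have hφpow : ∀ j : ℤ, φ (n₀ ^ j) = Multiplicative.ofAdd j := by
    intro j
    rw [map_zpow, hφn₀, ← ofAdd_zsmul]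
    simp
  have hgen : ∀ n : N, ∃ j : ℤ, n = n₀ ^ j := by
    intro n
    refine ⟨Multiplicative.toAdd (φ n), φ.injective ?_⟩
    rw [hφpow]
    simp
  have hord : ∀ j : ℤ, (n₀ : Γ) ^ j = 1 → j = 0 := by
    intro j hj
    have : (n₀ ^ j : N) = 1 := by
      apply Subtype.ext
      push_cast
      exact hj
    have := congrArg φ this
    rw [hφpow, map_one] at this
    simpa using this
  set q : Γ →* Multiplicative (ℤ × ℤ × ℤ) := ψ.toMonoidHom.comp (QuotientGroup.mk' N)
    with hq
  have hqs : Function.Surjective q :=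
    ψ.surjective.comp (QuotientGroup.mk'_surjective N)
  have hker : ∀ m, q m = 1 ↔ m ∈ N := by
    intro m
    rw [hq, MonoidHom.comp_apply, MulEquiv.coe_toMonoidHom, ψ.map_eq_one_iff]
    exact QuotientGroup.eq_one_iff m
  obtain ⟨g1, hg1⟩ := hqs (Multiplicative.ofAdd (1, 0, 0))
  obtain ⟨g2, hg2⟩ := hqs (Multiplicative.ofAdd (0, 1, 0))
  -- conjugation action on N, as exponent
  set a : Γ → (ℤ ≃+ ℤ) := fun g =>
    MulEquiv.toAdditive ((φ.symm.trans ((MulAut.conjNormal g : N ≃* N))).trans φ) with ha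
  set e : Γ → ℤ := fun g => a g 1 with he
  have haconj : ∀ g, φ (MulAut.conjNormal g n₀) = Multiplicative.ofAdd (e g) := by
    intro g
    rfl
  have hconj : ∀ g : Γ, g * (n₀ : Γ) * g⁻¹ = (n₀ : Γ) ^ (e g) := by
    intro g
    have : MulAut.conjNormal g n₀ = n₀ ^ (e g) := by
      apply φ.injective
      rw [haconj, hφpow]
    have h2 := congrArg (fun x : N => (x : Γ)) this
    simp only [MulAut.conjNormal_apply] at h2
    rw [h2]
    push_cast
    rfl
  have hunit : ∀ g : Γ, e g = 1 ∨ e g = -1 := by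
    intro g
    have hfl : ∀ (f : ℤ →+ ℤ) (n : ℤ), f n = n * f 1 := by
      intro f n
      have := map_zsmul f n (1 : ℤ)
      simpa [smul_eq_mul] using this
    have h1 : (a g) ((a g).symm 1) = 1 := (a g).apply_symm_apply 1
    have h2 : (a g) ((a g).symm 1) = ((a g).symm 1) * e g := by
      have := hfl (a g).toAddMonoidHom ((a g).symm 1)
      simpa [he] using this
    exact Int.isUnit_iff.mp (IsUnit.of_mul_eq_one (a := e g) ((a g).symm 1)
      (by rw [mul_comm, ← h2, h1]))
  have commute_of_one : ∀ g : Γ, e g = 1 → Commute (↑n₀ : Γ) g := by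
    intro g hg
    have := hconj g
    rw [hg, zpow_one] at this
    exact (mul_inv_eq_iff_eq_mul.mp this).symm
  rcases hunit g1 with h1 | h1
  · exact key_lemma n₀ hgen hord q hqs hker g1 hg1 (commute_of_one g1 h1)
  · have hg1c : g1 * (n₀ : Γ) * g1⁻¹ = (↑n₀ : Γ)⁻¹ := by
      have := hconj g1; rw [h1] at this; simpa using this
    rcases hunit g2 with h2 | h2
    · -- swap coordinates 1 and 2
      set A : Multiplicative (ℤ × ℤ × ℤ) ≃* Multiplicative (ℤ × ℤ × ℤ) :=
        AddEquiv.toMultiplicative swap12Z with hA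
      set q' : Γ →* Multiplicative (ℤ × ℤ × ℤ) := A.toMonoidHom.comp q with hq'
      have hq's : Function.Surjective q' := A.surjective.comp hqs
      have hker' : ∀ m, q' m = 1 ↔ m ∈ N := by
        intro m
        rw [hq', MonoidHom.comp_apply, MulEquiv.coe_toMonoidHom, A.map_eq_one_iff]
        exact hker m
      have hq't : q' g2 = Multiplicative.ofAdd (1, 0, 0) := by
        rw [hq', MonoidHom.comp_apply, MulEquiv.coe_toMonoidHom, hg2]
        rfl
      exact key_lemma n₀ hgen hord q' hq's hker' g2 hq't (commute_of_one g2 h2)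
    · -- both act by -1 : use t = g1 * g2⁻¹ and a shear
      have hg2c : g2 * (n₀ : Γ) * g2⁻¹ = (↑n₀ : Γ)⁻¹ := by
        have := hconj g2; rw [h2] at this; simpa using this
      set t : Γ := g1 * g2⁻¹ with ht
      have hct : Commute (↑n₀ : Γ) t := by
        have hg2c' : g2⁻¹ * (n₀ : Γ) * g2 = (↑n₀ : Γ)⁻¹ := by
          have h3 : (n₀ : Γ) = g2⁻¹ * (↑n₀ : Γ)⁻¹ * g2 := by
            rw [← hg2c]; group
          have h4 := congrArg (fun x : Γ => x⁻¹) h3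
          simp only [mul_inv_rev, inv_inv] at h4
          rw [h4]
          group
        have : t * (n₀ : Γ) * t⁻¹ = (n₀ : Γ) := by
          rw [ht]
          have : g1 * g2⁻¹ * (n₀ : Γ) * (g1 * g2⁻¹)⁻¹
              = g1 * (g2⁻¹ * (n₀ : Γ) * g2) * g1⁻¹ := by group
          rw [this, hg2c']
          have h5 := congrArg (fun x : Γ => x⁻¹) hg1c
          simp only [mul_inv_rev, inv_inv] at h5
          rw [mul_assoc]
          exact h5
        exact (mul_inv_eq_iff_eq_mul.mp this).symm
      set A : Multiplicative (ℤ × ℤ × ℤ) ≃* Multiplicative (ℤ × ℤ × ℤ) :=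
        AddEquiv.toMultiplicative shearZ with hA
      set q' : Γ →* Multiplicative (ℤ × ℤ × ℤ) := A.toMonoidHom.comp q with hq'
      have hq's : Function.Surjective q' := A.surjective.comp hqs
      have hker' : ∀ m, q' m = 1 ↔ m ∈ N := by
        intro m
        rw [hq', MonoidHom.comp_apply, MulEquiv.coe_toMonoidHom, A.map_eq_one_iff]
        exact hker m
      have hqt0 : q t = Multiplicative.ofAdd (1, -1, 0) := by
        rw [ht, map_mul, map_inv, hg1, hg2, ← ofAdd_neg, ← ofAdd_add]
        norm_num
      have hq't : q' t = Multiplicative.ofAdd (1, 0, 0) := by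
        rw [hq', MonoidHom.comp_apply, MulEquiv.coe_toMonoidHom, hqt0]
        show Multiplicative.ofAdd (shearZ (1, -1, 0)) = _
        norm_num [shearZ]
      exact key_lemma n₀ hgen hord q' hq's hker' t hq't hct
end

section
/- For every integer g ≥ 2, the surface group of genus g — the group presented by generators a₁, b₁, …, a_g, b_g and the single relation [a₁,b₁][a₂,b₂]⋯[a_g,b_g] = 1 — is not a solvable group. -/
open scoped commutatorElement in
/-- The surface relator `[a₁,b₁][a₂,b₂]⋯[a_g,b_g]` in the free group on the `2g` generators
`a i = .inl i`, `b i = .inr i`. -/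
def surfaceRelator (g : ℕ) : FreeGroup (Fin g ⊕ Fin g) :=
  (List.ofFn fun i : Fin g =>
    ⁅(FreeGroup.of (Sum.inl i) : FreeGroup (Fin g ⊕ Fin g)), FreeGroup.of (Sum.inr i)⁆).prod

/-- The surface group of genus `g`: generators `a₁, b₁, …, a_g, b_g` and the single relation
`[a₁,b₁][a₂,b₂]⋯[a_g,b_g] = 1`. -/
abbrev SurfaceGroup (g : ℕ) : Type :=
  PresentedGroup ({surfaceRelator g} : Set (FreeGroup (Fin g ⊕ Fin g)))

/-- For every `g ≥ 2`, the surface group of genus `g` is not solvable. -/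
theorem stmt9 (g : ℕ) (hg : 2 ≤ g) : ¬ IsSolvable (SurfaceGroup g) := by
  intro h
  set σ : Equiv.Perm (Fin 5) := finRotate 5 with hσ
  set τ : Equiv.Perm (Fin 5) := Equiv.swap 0 (σ 0) with hτ
  let f : Fin g ⊕ Fin g → Equiv.Perm (Fin 5) := fun x => match x with
    | .inl i => if i.val = 0 then σ else if i.val = 1 then τ else 1
    | .inr _ => 1
  have hrel : ∀ r ∈ ({surfaceRelator g} : Set (FreeGroup (Fin g ⊕ Fin g))),
      FreeGroup.lift f r = 1 := by
    intro r hr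
    simp only [Set.mem_singleton_iff] at hr; subst hr
    rw [surfaceRelator, map_list_prod]
    apply List.prod_eq_one
    intro x hx
    simp only [List.map_ofFn, Function.comp, List.mem_ofFn] at hx
    obtain ⟨i, rfl⟩ := hx
    rw [map_commutatorElement]
    simp [f]
  let φ := PresentedGroup.toGroup hrel
  have hmem : ∀ x, f x ∈ φ.range := by
    intro x
    exact ⟨PresentedGroup.of x, PresentedGroup.toGroup.of hrel⟩
  have hσcyc : σ.IsCycle := isCycle_finRotate (n := 3)
  have hσsupp : σ.support = Finset.univ := support_finRotate (n := 3)
  have hsurj : Function.Surjective φ := by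
    rw [← MonoidHom.range_eq_top, eq_top_iff,
      ← Equiv.Perm.closure_cycle_adjacent_swap hσcyc hσsupp 0, Subgroup.closure_le]
    rintro x (rfl | rfl)
    · have := hmem (Sum.inl ⟨0, by omega⟩)
      simpa [f] using this
    · have := hmem (Sum.inl ⟨1, by omega⟩)
      simpa [f] using this
  exact Equiv.Perm.fin_5_not_solvable (by haveI : Group.IsSolvable (SurfaceGroup g) := h; exact solvable_of_surjective hsurj)
end

section
/- Let a, b ∈ ℝ and let 𝔤 be a real Lie algebra with a basis X₁, X₂, X₃, X₄ whose bracket relations on basis elements are ⁅X₄, X₁⁆ = aX₁ − bX₂, ⁅X₄, X₂⁆ = bX₁ + aX₂, ⁅X₄, X₃⁆ = −2aX₃, and all other brackets of basis elements vanish. Let J be the linear endomorphism of 𝔤 with JX₁ = X₂, JX₂ = −X₁, JX₃ = X₄, JX₄ = −X₃. Then J ∘ J = −id and the Nijenhuis tensor N_J vanishes identically: N_J(x, y) = 0 for all x, y ∈ 𝔤. -/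
/-- On the real Lie algebra with basis `X₁, X₂, X₃, X₄` and brackets
`⁅X₄,X₁⁆ = aX₁ - bX₂`, `⁅X₄,X₂⁆ = bX₁ + aX₂`, `⁅X₄,X₃⁆ = -2aX₃` (all other brackets of
basis elements vanishing) — the Lie algebra of Inoue surfaces of type `S⁰` — the
endomorphism `J` with `JX₁ = X₂`, `JX₂ = -X₁`, `JX₃ = X₄`, `JX₄ = -X₃` satisfies
`J² = -id` and has vanishing Nijenhuis tensor. -/
theorem stmt11 (a b : ℝ) (L : Type*) [LieRing L] [LieAlgebra ℝ L] (X : Module.Basis (Fin 4) ℝ L)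
    (h12 : ⁅X 0, X 1⁆ = 0) (h13 : ⁅X 0, X 2⁆ = 0) (h23 : ⁅X 1, X 2⁆ = 0)
    (h41 : ⁅X 3, X 0⁆ = a • X 0 - b • X 1)
    (h42 : ⁅X 3, X 1⁆ = b • X 0 + a • X 1)
    (h43 : ⁅X 3, X 2⁆ = (-2 * a) • X 2)
    (J : L →ₗ[ℝ] L)
    (hJ1 : J (X 0) = X 1) (hJ2 : J (X 1) = -X 0)
    (hJ3 : J (X 2) = X 3) (hJ4 : J (X 3) = -X 2) :
    (∀ x : L, J (J x) = -x) ∧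
      ∀ x y : L, ⁅J x, J y⁆ - J ⁅J x, y⁆ - J ⁅x, J y⁆ - ⁅x, y⁆ = 0 := by
  have h21 : ⁅X 1, X 0⁆ = 0 := by rw [← lie_skew, h12, neg_zero]
  have h31 : ⁅X 2, X 0⁆ = 0 := by rw [← lie_skew, h13, neg_zero]
  have h32 : ⁅X 2, X 1⁆ = 0 := by rw [← lie_skew, h23, neg_zero]
  have h14 : ⁅X 0, X 3⁆ = -(a • X 0 - b • X 1) := by rw [← lie_skew, h41]
  have h24 : ⁅X 1, X 3⁆ = -(b • X 0 + a • X 1) := by rw [← lie_skew, h42]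
  have h34 : ⁅X 2, X 3⁆ = -((-2 * a) • X 2) := by rw [← lie_skew, h43]
  -- J ∘ J = -id
  have hJJ : J ∘ₗ J = -LinearMap.id := by
    apply X.ext
    intro i
    fin_cases i <;>
      simp [hJ1, hJ2, hJ3, hJ4]
  have part1 : ∀ x : L, J (J x) = -x := fun x => by simpa using LinearMap.ext_iff.mp hJJ x
  refine ⟨part1, ?_⟩
  -- Nijenhuis tensor as a bilinear map
  let N : L →ₗ[ℝ] L →ₗ[ℝ] L := LinearMap.mk₂ ℝ
    (fun x y => ⁅J x, J y⁆ - J ⁅J x, y⁆ - J ⁅x, J y⁆ - ⁅x, y⁆)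
    (fun x x' y => by simp only [map_add, add_lie, lie_add]; abel)
    (fun c x y => by simp only [map_smul, smul_lie, lie_smul, smul_sub])
    (fun x y y' => by simp only [map_add, add_lie, lie_add]; abel)
    (fun c x y => by simp only [map_smul, smul_lie, lie_smul, smul_sub])
  have hN : N = 0 := by
    apply X.ext
    intro i
    apply X.ext
    intro j
    fin_cases i <;> fin_cases j <;>
      simp [N, hJ1, hJ2, hJ3, hJ4, h12, h13, h23, h21, h31, h32, h41, h42, h43,
        h14, h24, h34, lie_self, smul_smul, smul_sub, smul_add, sub_smul, add_smul] <;>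
      module
  intro x y
  have := LinearMap.ext_iff.mp (LinearMap.ext_iff.mp hN x) y
  simpa [N] using this
end

section
/- Let q ∈ ℝ and let 𝔤 be a real Lie algebra with a basis X₁, X₂, X₃, X₄ whose bracket relations on basis elements are ⁅X₂, X₃⁆ = −X₁, ⁅X₄, X₂⁆ = X₂, ⁅X₄, X₃⁆ = −X₃, and all other brackets of basis elements vanish. Let J be the linear endomorphism of 𝔤 with JX₁ = X₂, JX₂ = −X₁, JX₃ = X₄ − qX₂, JX₄ = −X₃ − qX₁. Then J ∘ J = −id and the Nijenhuis tensor N_J vanishes identically: N_J(x, y) = 0 for all x, y ∈ 𝔤. -/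
/-- On the real Lie algebra with basis `X₁, X₂, X₃, X₄` and brackets
`⁅X₂,X₃⁆ = -X₁`, `⁅X₄,X₂⁆ = X₂`, `⁅X₄,X₃⁆ = -X₃` (all other brackets of basis elements
vanishing) — the Lie algebra of Inoue surfaces of type `S⁺` and `S⁻` — the endomorphism `J`
with `JX₁ = X₂`, `JX₂ = -X₁`, `JX₃ = X₄ - qX₂`, `JX₄ = -X₃ - qX₁` satisfies `J² = -id`
and has vanishing Nijenhuis tensor. -/
theorem stmt12 (q : ℝ) (L : Type*) [LieRing L] [LieAlgebra ℝ L] (X : Module.Basis (Fin 4) ℝ L)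
    (h12 : ⁅X 0, X 1⁆ = 0) (h13 : ⁅X 0, X 2⁆ = 0) (h14 : ⁅X 0, X 3⁆ = 0)
    (h23 : ⁅X 1, X 2⁆ = -X 0)
    (h42 : ⁅X 3, X 1⁆ = X 1) (h43 : ⁅X 3, X 2⁆ = -X 2)
    (J : L →ₗ[ℝ] L)
    (hJ1 : J (X 0) = X 1) (hJ2 : J (X 1) = -X 0)
    (hJ3 : J (X 2) = X 3 - q • X 1) (hJ4 : J (X 3) = -X 2 - q • X 0) :
    (∀ x : L, J (J x) = -x) ∧
      ∀ x y : L, ⁅J x, J y⁆ - J ⁅J x, y⁆ - J ⁅x, J y⁆ - ⁅x, y⁆ = 0 := by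
  have h21 : ⁅X 1, X 0⁆ = 0 := by rw [← lie_skew, h12]; simp
  have h31 : ⁅X 2, X 0⁆ = 0 := by rw [← lie_skew, h13]; simp
  have h41 : ⁅X 3, X 0⁆ = 0 := by rw [← lie_skew, h14]; simp
  have h32 : ⁅X 2, X 1⁆ = X 0 := by rw [← lie_skew, h23]; simp
  have h24 : ⁅X 1, X 3⁆ = -X 1 := by rw [← lie_skew, h42]
  have h34 : ⁅X 2, X 3⁆ = X 2 := by rw [← lie_skew, h43]; simp
  have hJJ : J ∘ₗ J = -LinearMap.id := by
    apply X.ext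
    intro i
    fin_cases i <;>
      simp [hJ1, hJ2, hJ3, hJ4, map_sub, map_smul, map_neg, sub_eq_add_neg]
  refine ⟨fun x => by simpa using congrArg (fun f : L →ₗ[ℝ] L => f x) hJJ, ?_⟩
  let N : L →ₗ[ℝ] L →ₗ[ℝ] L := LinearMap.mk₂ ℝ
    (fun x y => ⁅J x, J y⁆ - J ⁅J x, y⁆ - J ⁅x, J y⁆ - ⁅x, y⁆)
    (by intro x x' y; simp [add_lie, lie_add, map_add]; abel)
    (by intro c x y; simp [smul_lie, lie_smul, map_smul, smul_sub])
    (by intro x y y'; simp [add_lie, lie_add, map_add]; abel)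
    (by intro c x y; simp [smul_lie, lie_smul, map_smul, smul_sub])
  have hN : N = 0 := by
    apply X.ext
    intro i
    apply X.ext
    intro j
    fin_cases i <;> fin_cases j <;>
      simp [N, hJ1, hJ2, hJ3, hJ4, h12, h13, h14, h23, h42, h43, h21, h31, h41, h32, h24, h34,
        lie_sub, sub_lie, lie_smul, smul_lie, map_sub, map_smul, map_neg, lie_neg, neg_lie,
        smul_sub, smul_smul, sub_eq_add_neg] <;> abel
  intro x y
  have := congrArg (fun f : L →ₗ[ℝ] L →ₗ[ℝ] L => f x y) hN
  simpa [N] using this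
end

section
/- Let k, l be positive integers and let 𝔤 be a real Lie algebra of dimension 2l + 2k with a basis X₁, …, X_{2l}, X_{2l+1}, …, X_{2l+2k} whose bracket relations on basis elements are ⁅X_{2l+2i}, X_{2j−1}⁆ = −X_{2j} and ⁅X_{2l+2i}, X_{2j}⁆ = X_{2j−1} for all 1 ≤ i ≤ k and 1 ≤ j ≤ l, with all other brackets of basis elements vanishing. Let J be the linear endomorphism of 𝔤 with JX_{2j−1} = X_{2j}, JX_{2j} = −X_{2j−1} for 1 ≤ j ≤ l and JX_{2l+2i−1} = X_{2l+2i}, JX_{2l+2i} = −X_{2l+2i−1} for 1 ≤ i ≤ k. Then J ∘ J = −id and the Nijenhuis tensor N_J vanishes identically: N_J(x, y) = 0 for all x, y ∈ 𝔤. -/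
/-- Let `k, l ≥ 1` and let `𝔤` be the real Lie algebra of dimension
`2l + 2k` with basis `X₁, …, X_{2l}, X_{2l+1}, …, X_{2l+2k}` and brackets
`⁅X_{2l+2i}, X_{2j-1}⁆ = -X_{2j}`, `⁅X_{2l+2i}, X_{2j}⁆ = X_{2j-1}` (`1 ≤ i ≤ k`,
`1 ≤ j ≤ l`), all other brackets of basis elements vanishing. Here the basis is indexed by
`(Fin l × Bool) ⊕ (Fin k × Bool)`: `X (.inl (j, false)) = X_{2j-1}`,
`X (.inl (j, true)) = X_{2j}`, `X (.inr (i, false)) = X_{2l+2i-1}`,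
`X (.inr (i, true)) = X_{2l+2i}`. The endomorphism `J` with `JX_{2j-1} = X_{2j}`,
`JX_{2j} = -X_{2j-1}`, `JX_{2l+2i-1} = X_{2l+2i}`, `JX_{2l+2i} = -X_{2l+2i-1}` satisfies
`J² = -id` and has vanishing Nijenhuis tensor. -/
theorem stmt13 (k l : ℕ) (hk : 0 < k) (hl : 0 < l)
    (L : Type*) [LieRing L] [LieAlgebra ℝ L]
    (X : Module.Basis ((Fin l × Bool) ⊕ (Fin k × Bool)) ℝ L)
    (hbr1 : ∀ (i : Fin k) (j : Fin l),
      ⁅X (.inr (i, true)), X (.inl (j, false))⁆ = -X (.inl (j, true)))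
    (hbr2 : ∀ (i : Fin k) (j : Fin l),
      ⁅X (.inr (i, true)), X (.inl (j, true))⁆ = X (.inl (j, false)))
    (hll : ∀ p q : Fin l × Bool, ⁅X (.inl p), X (.inl q)⁆ = 0)
    (hrr : ∀ p q : Fin k × Bool, ⁅X (.inr p), X (.inr q)⁆ = 0)
    (hodd : ∀ (i : Fin k) (p : Fin l × Bool), ⁅X (.inr (i, false)), X (.inl p)⁆ = 0)
    (J : L →ₗ[ℝ] L)
    (hJ1 : ∀ j : Fin l, J (X (.inl (j, false))) = X (.inl (j, true)))
    (hJ2 : ∀ j : Fin l, J (X (.inl (j, true))) = -X (.inl (j, false)))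
    (hJ3 : ∀ i : Fin k, J (X (.inr (i, false))) = X (.inr (i, true)))
    (hJ4 : ∀ i : Fin k, J (X (.inr (i, true))) = -X (.inr (i, false))) :
    (∀ x : L, J (J x) = -x) ∧
      ∀ x y : L, ⁅J x, J y⁆ - J ⁅J x, y⁆ - J ⁅x, J y⁆ - ⁅x, y⁆ = 0 := by
  have hbr1' : ∀ (i : Fin k) (j : Fin l),
      ⁅X (.inl (j, false)), X (.inr (i, true))⁆ = X (.inl (j, true)) := by
    intro i j; rw [← lie_skew, hbr1, neg_neg]
  have hbr2' : ∀ (i : Fin k) (j : Fin l),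
      ⁅X (.inl (j, true)), X (.inr (i, true))⁆ = -X (.inl (j, false)) := by
    intro i j; rw [← lie_skew, hbr2]
  have hodd' : ∀ (i : Fin k) (p : Fin l × Bool), ⁅X (.inl p), X (.inr (i, false))⁆ = 0 := by
    intro i p; rw [← lie_skew, hodd, neg_zero]
  have hJJ : ∀ x : L, J (J x) = -x := by
    have : J ∘ₗ J = -LinearMap.id := by
      apply X.ext
      rintro (⟨j, _ | _⟩ | ⟨i, _ | _⟩) <;>
        simp [hJ1, hJ2, hJ3, hJ4]
    intro x
    simpa using LinearMap.congr_fun this x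
  refine ⟨hJJ, ?_⟩
  set N : L →ₗ[ℝ] L →ₗ[ℝ] L := LinearMap.mk₂ ℝ
    (fun x y => ⁅J x, J y⁆ - J ⁅J x, y⁆ - J ⁅x, J y⁆ - ⁅x, y⁆)
    (by intro x x' y; simp [add_lie, lie_add]; abel)
    (by intro c x y; simp [smul_lie, lie_smul, smul_sub])
    (by intro x y y'; simp [add_lie, lie_add]; abel)
    (by intro c x y; simp [smul_lie, lie_smul, smul_sub]) with hN
  have hzero : N = 0 := by
    apply LinearMap.ext_basis X X
    rintro (⟨j, b⟩ | ⟨i, b⟩) (⟨j', b'⟩ | ⟨i', b'⟩) <;> cases b <;> cases b' <;>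
      simp [hN, hJ1, hJ2, hJ3, hJ4, hbr1, hbr2, hbr1', hbr2', hll, hrr, hodd, hodd']
  intro x y
  have := LinearMap.congr_fun (LinearMap.congr_fun hzero x) y
  simpa [hN] using this
end

section
/- Let a, b ∈ ℝ with a² + b² = 1. Then the map ψ : ℝ³ → ℝ³ defined by ψ(x, y, z) = (ax − by, bx + ay, z + h(x, y)), where h(x, y) = (b/2)(a x² − a y² − 2 b x y), is a group automorphism of the Heisenberg group H. -/
/-- The Heisenberg group: `ℝ³` with `(x,y,s)·(x',y',s') = (x+x', y+y', s+s'+xy')`. -/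
@[ext]
structure Heisenberg where
  x : ℝ
  y : ℝ
  s : ℝ

namespace Heisenberg

instance : Mul Heisenberg := ⟨fun a b => ⟨a.x + b.x, a.y + b.y, a.s + b.s + a.x * b.y⟩⟩
instance : One Heisenberg := ⟨⟨0, 0, 0⟩⟩
instance : Inv Heisenberg := ⟨fun a => ⟨-a.x, -a.y, -a.s + a.x * a.y⟩⟩

@[simp] lemma mul_x (a b : Heisenberg) : (a * b).x = a.x + b.x := rfl
@[simp] lemma mul_y (a b : Heisenberg) : (a * b).y = a.y + b.y := rfl
@[simp] lemma mul_s (a b : Heisenberg) : (a * b).s = a.s + b.s + a.x * b.y := rfl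
@[simp] lemma one_x : (1 : Heisenberg).x = 0 := rfl
@[simp] lemma one_y : (1 : Heisenberg).y = 0 := rfl
@[simp] lemma one_s : (1 : Heisenberg).s = 0 := rfl
@[simp] lemma inv_x (a : Heisenberg) : a⁻¹.x = -a.x := rfl
@[simp] lemma inv_y (a : Heisenberg) : a⁻¹.y = -a.y := rfl
@[simp] lemma inv_s (a : Heisenberg) : a⁻¹.s = -a.s + a.x * a.y := rfl

instance : Group Heisenberg where
  mul_assoc a b c := by ext <;> simp <;> ring
  one_mul a := by ext <;> simp
  mul_one a := by ext <;> simp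
  inv_mul_cancel a := by ext <;> simp <;> ring

end Heisenberg

/-- For `a, b ∈ ℝ` with `a² + b² = 1`, the map
`ψ(x, y, z) = (ax − by, bx + ay, z + h(x, y))`, with
`h(x, y) = (b/2)(a x² − a y² − 2 b x y)`, is a group automorphism of the Heisenberg
group `H`. -/
theorem stmt15 (a b : ℝ) (hab : a ^ 2 + b ^ 2 = 1) :
    ∃ ψ : Heisenberg ≃* Heisenberg, ∀ p : Heisenberg,
      ψ p = ⟨a * p.x - b * p.y, b * p.x + a * p.y,
              p.s + b / 2 * (a * p.x ^ 2 - a * p.y ^ 2 - 2 * b * p.x * p.y)⟩ := by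
  refine ⟨{ toFun := fun p => ⟨a * p.x - b * p.y, b * p.x + a * p.y,
              p.s + b / 2 * (a * p.x ^ 2 - a * p.y ^ 2 - 2 * b * p.x * p.y)⟩,
            invFun := fun p => ⟨a * p.x + b * p.y, -b * p.x + a * p.y,
              p.s - b / 2 * (a * p.x ^ 2 - a * p.y ^ 2 + 2 * b * p.x * p.y)⟩,
            left_inv := fun p => ?_, right_inv := fun p => ?_,
            map_mul' := fun p q => ?_ }, fun p => rfl⟩
  · ext <;> simp only []
    · linear_combination p.x * hab
    · linear_combination p.y * hab
    · linear_combination (-(b / 2) * (a * (p.x ^ 2 - p.y ^ 2) - 2 * b * p.x * p.y)) * hab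
  · ext <;> simp only []
    · linear_combination p.x * hab
    · linear_combination p.y * hab
    · linear_combination (b / 2 * (a * (p.x ^ 2 - p.y ^ 2) + 2 * b * p.x * p.y)) * hab
  · ext <;> simp only [Heisenberg.mul_x, Heisenberg.mul_y, Heisenberg.mul_s]
    · ring
    · ring
    · linear_combination (-(p.x * q.y)) * hab
end

section
/- Let 𝔤 be a real Lie algebra with a basis X₁, X₂, Y₁, Y₂, Z, W whose bracket relations on basis elements are ⁅X₁, Z⁆ = X₁, ⁅X₂, Z⁆ = −X₂, ⁅Y₁, Z⁆ = Y₁, ⁅Y₂, Z⁆ = −Y₂, with all other brackets of basis elements vanishing. Let ω be the alternating bilinear form on 𝔤 determined by ω(X₁, X₂) = 1, ω(Y₁, Y₂) = 1, ω(Z, W) = 1, and ω = 0 on all other pairs of distinct basis elements, and let J be the linear endomorphism of 𝔤 with JX₁ = Y₁, JY₁ = −X₁, JX₂ = Y₂, JY₂ = −X₂, JZ = W, JW = −Z. Then: (i) ω is closed, i.e., ω(⁅x, y⁆, z) + ω(⁅y, z⁆, x) + ω(⁅z, x⁆, y) = 0 for all x, y, z ∈ 𝔤; (ii) ω is nondegenerate,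 i.e., if ω(x, y) = 0 for all y ∈ 𝔤 then x = 0; (iii) J ∘ J = −id and the Nijenhuis tensor N_J vanishes identically; and (iv) ω(Jx, Jy) = ω(x, y) for all x, y ∈ 𝔤. -/
set_option maxHeartbeats 4000000 in

/-- On the 6-dimensional completely solvable real Lie algebra with basis
`X₁, X₂, Y₁, Y₂, Z, W` (here `b 0 = X₁`, `b 1 = X₂`, `b 2 = Y₁`, `b 3 = Y₂`, `b 4 = Z`,
`b 5 = W`) and brackets `⁅X₁,Z⁆ = X₁`, `⁅X₂,Z⁆ = -X₂`, `⁅Y₁,Z⁆ = Y₁`, `⁅Y₂,Z⁆ = -Y₂`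
(all other brackets of basis elements vanishing), the pair `(ω, J)` with
`ω = α₁∧α₂ + β₁∧β₂ + γ∧η` (i.e. `ω(X₁,X₂) = ω(Y₁,Y₂) = ω(Z,W) = 1` and `ω = 0` on all
other pairs of distinct basis elements) and `JX₁ = Y₁`, `JY₁ = -X₁`, `JX₂ = Y₂`,
`JY₂ = -X₂`, `JZ = W`, `JW = -Z` is a pseudo-Kähler structure: `ω` is closed and
nondegenerate, `J² = -id` with vanishing Nijenhuis tensor, and `ω` is `J`-invariant. -/
theorem stmt16 (L : Type*) [LieRing L] [LieAlgebra ℝ L] (b : Module.Basis (Fin 6) ℝ L)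
    -- bracket relations (X₁ = b 0, X₂ = b 1, Y₁ = b 2, Y₂ = b 3, Z = b 4, W = b 5)
    (hX1Z : ⁅b 0, b 4⁆ = b 0) (hX2Z : ⁅b 1, b 4⁆ = -b 1)
    (hY1Z : ⁅b 2, b 4⁆ = b 2) (hY2Z : ⁅b 3, b 4⁆ = -b 3)
    (h01 : ⁅b 0, b 1⁆ = 0) (h02 : ⁅b 0, b 2⁆ = 0) (h03 : ⁅b 0, b 3⁆ = 0)
    (h05 : ⁅b 0, b 5⁆ = 0) (h12 : ⁅b 1, b 2⁆ = 0) (h13 : ⁅b 1, b 3⁆ = 0)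
    (h15 : ⁅b 1, b 5⁆ = 0) (h23 : ⁅b 2, b 3⁆ = 0) (h25 : ⁅b 2, b 5⁆ = 0)
    (h35 : ⁅b 3, b 5⁆ = 0) (h45 : ⁅b 4, b 5⁆ = 0)
    -- the 2-form ω
    (ω : L →ₗ[ℝ] L →ₗ[ℝ] ℝ) (hAlt : ∀ x : L, ω x x = 0)
    (hw01 : ω (b 0) (b 1) = 1) (hw23 : ω (b 2) (b 3) = 1) (hw45 : ω (b 4) (b 5) = 1)
    (hw02 : ω (b 0) (b 2) = 0) (hw03 : ω (b 0) (b 3) = 0) (hw04 : ω (b 0) (b 4) = 0)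
    (hw05 : ω (b 0) (b 5) = 0) (hw12 : ω (b 1) (b 2) = 0) (hw13 : ω (b 1) (b 3) = 0)
    (hw14 : ω (b 1) (b 4) = 0) (hw15 : ω (b 1) (b 5) = 0) (hw24 : ω (b 2) (b 4) = 0)
    (hw25 : ω (b 2) (b 5) = 0) (hw34 : ω (b 3) (b 4) = 0) (hw35 : ω (b 3) (b 5) = 0)
    -- the complex structure J
    (J : L →ₗ[ℝ] L)
    (hJ0 : J (b 0) = b 2) (hJ2 : J (b 2) = -b 0) (hJ1 : J (b 1) = b 3)
    (hJ3 : J (b 3) = -b 1) (hJ4 : J (b 4) = b 5) (hJ5 : J (b 5) = -b 4) :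
    (∀ x y z : L, ω ⁅x, y⁆ z + ω ⁅y, z⁆ x + ω ⁅z, x⁆ y = 0) ∧
    (∀ x : L, (∀ y : L, ω x y = 0) → x = 0) ∧
    ((∀ x : L, J (J x) = -x) ∧
      ∀ x y : L, ⁅J x, J y⁆ - J ⁅J x, y⁆ - J ⁅x, J y⁆ - ⁅x, y⁆ = 0) ∧
    (∀ x y : L, ω (J x) (J y) = ω x y) := by
  -- derived bracket relations
  have h10 : ⁅b 1, b 0⁆ = (0 : L) := by rw [← lie_skew, h01, neg_zero]
  have h20 : ⁅b 2, b 0⁆ = (0 : L) := by rw [← lie_skew, h02, neg_zero]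
  have h30 : ⁅b 3, b 0⁆ = (0 : L) := by rw [← lie_skew, h03, neg_zero]
  have h50 : ⁅b 5, b 0⁆ = (0 : L) := by rw [← lie_skew, h05, neg_zero]
  have h21 : ⁅b 2, b 1⁆ = (0 : L) := by rw [← lie_skew, h12, neg_zero]
  have h31 : ⁅b 3, b 1⁆ = (0 : L) := by rw [← lie_skew, h13, neg_zero]
  have h51 : ⁅b 5, b 1⁆ = (0 : L) := by rw [← lie_skew, h15, neg_zero]
  have h32 : ⁅b 3, b 2⁆ = (0 : L) := by rw [← lie_skew, h23, neg_zero]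
  have h52 : ⁅b 5, b 2⁆ = (0 : L) := by rw [← lie_skew, h25, neg_zero]
  have h53 : ⁅b 5, b 3⁆ = (0 : L) := by rw [← lie_skew, h35, neg_zero]
  have h54 : ⁅b 5, b 4⁆ = (0 : L) := by rw [← lie_skew, h45, neg_zero]
  have h40 : ⁅b 4, b 0⁆ = -b 0 := by rw [← lie_skew, hX1Z]
  have h41 : ⁅b 4, b 1⁆ = b 1 := by rw [← lie_skew, hX2Z, neg_neg]
  have h42 : ⁅b 4, b 2⁆ = -b 2 := by rw [← lie_skew, hY1Z]
  have h43 : ⁅b 4, b 3⁆ = b 3 := by rw [← lie_skew, hY2Z, neg_neg]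
  -- skew-symmetry of ω
  have hskew : ∀ x y : L, ω y x = -ω x y := by
    intro x y
    have h := hAlt (x + y)
    simp only [map_add, LinearMap.add_apply, hAlt x, hAlt y] at h
    linarith
  have hw10 : ω (b 1) (b 0) = -1 := by rw [hskew, hw01]
  have hw32 : ω (b 3) (b 2) = -1 := by rw [hskew, hw23]
  have hw54 : ω (b 5) (b 4) = -1 := by rw [hskew, hw45]
  have hw20 : ω (b 2) (b 0) = 0 := by rw [hskew, hw02, neg_zero]
  have hw30 : ω (b 3) (b 0) = 0 := by rw [hskew, hw03, neg_zero]
  have hw40 : ω (b 4) (b 0) = 0 := by rw [hskew, hw04, neg_zero]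
  have hw50 : ω (b 5) (b 0) = 0 := by rw [hskew, hw05, neg_zero]
  have hw21 : ω (b 2) (b 1) = 0 := by rw [hskew, hw12, neg_zero]
  have hw31 : ω (b 3) (b 1) = 0 := by rw [hskew, hw13, neg_zero]
  have hw41 : ω (b 4) (b 1) = 0 := by rw [hskew, hw14, neg_zero]
  have hw51 : ω (b 5) (b 1) = 0 := by rw [hskew, hw15, neg_zero]
  have hw42 : ω (b 4) (b 2) = 0 := by rw [hskew, hw24, neg_zero]
  have hw52 : ω (b 5) (b 2) = 0 := by rw [hskew, hw25, neg_zero]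
  have hw43 : ω (b 4) (b 3) = 0 := by rw [hskew, hw34, neg_zero]
  have hw53 : ω (b 5) (b 3) = 0 := by rw [hskew, hw35, neg_zero]
  have hmem : ∀ x : L, x ∈ Submodule.span ℝ (Set.range ⇑b) := fun x => by
    rw [b.span_eq]; exact Submodule.mem_top
  -- (i) closedness on basis elements
  have key1 : ∀ i j k : Fin 6,
      ω ⁅b i, b j⁆ (b k) + ω ⁅b j, b k⁆ (b i) + ω ⁅b k, b i⁆ (b j) = 0 := by
    intro i j k
    fin_cases i <;> fin_cases j <;> fin_cases k <;>
      simp [hX1Z, hX2Z, hY1Z, hY2Z, h01, h02, h03, h05, h12, h13, h15, h23, h25, h35, h45,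
        h10, h20, h30, h50, h21, h31, h51, h32, h52, h53, h54, h40, h41, h42, h43,
        lie_self, hAlt, hw01, hw23, hw45, hw02, hw03, hw04, hw05, hw12, hw13, hw14, hw15,
        hw24, hw25, hw34, hw35, hw10, hw32, hw54, hw20, hw30, hw40, hw50, hw21, hw31,
        hw41, hw51, hw42, hw52, hw43, hw53]
  have step1 : ∀ (i j : Fin 6) (z : L),
      ω ⁅b i, b j⁆ z + ω ⁅b j, z⁆ (b i) + ω ⁅z, b i⁆ (b j) = 0 := by
    intro i j z
    refine Submodule.span_induction
      (p := fun z _ => ω ⁅b i, b j⁆ z + ω ⁅b j, z⁆ (b i) + ω ⁅z, b i⁆ (b j) = 0)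
      ?_ ?_ ?_ ?_ (hmem z)
    · rintro _ ⟨k, rfl⟩; exact key1 i j k
    · simp
    · intro u v _ _ hu hv
      simp only [lie_add, add_lie, map_add, LinearMap.add_apply] at *
      linarith
    · intro a u _ hu
      simp only [lie_smul, smul_lie, map_smul, LinearMap.smul_apply, smul_eq_mul]
      linear_combination a * hu
  have step2 : ∀ (i : Fin 6) (y z : L),
      ω ⁅b i, y⁆ z + ω ⁅y, z⁆ (b i) + ω ⁅z, b i⁆ y = 0 := by
    intro i y z
    refine Submodule.span_induction
      (p := fun y _ => ω ⁅b i, y⁆ z + ω ⁅y, z⁆ (b i) + ω ⁅z, b i⁆ y = 0)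
      ?_ ?_ ?_ ?_ (hmem y)
    · rintro _ ⟨j, rfl⟩; exact step1 i j z
    · simp
    · intro u v _ _ hu hv
      simp only [lie_add, add_lie, map_add, LinearMap.add_apply] at *
      linarith
    · intro a u _ hu
      simp only [lie_smul, smul_lie, map_smul, LinearMap.smul_apply, smul_eq_mul]
      linear_combination a * hu
  have closed : ∀ x y z : L, ω ⁅x, y⁆ z + ω ⁅y, z⁆ x + ω ⁅z, x⁆ y = 0 := by
    intro x y z
    refine Submodule.span_induction
      (p := fun x _ => ω ⁅x, y⁆ z + ω ⁅y, z⁆ x + ω ⁅z, x⁆ y = 0)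
      ?_ ?_ ?_ ?_ (hmem x)
    · rintro _ ⟨i, rfl⟩; exact step2 i y z
    · simp
    · intro u v _ _ hu hv
      simp only [lie_add, add_lie, map_add, LinearMap.add_apply] at *
      linarith
    · intro a u _ hu
      simp only [lie_smul, smul_lie, map_smul, LinearMap.smul_apply, smul_eq_mul]
      linear_combination a * hu
  -- (ii) nondegeneracy
  have nondeg : ∀ x : L, (∀ y : L, ω x y = 0) → x = 0 := by
    intro x hx
    have key : ∀ j : Fin 6, ∑ i : Fin 6, b.repr x i * ω (b i) (b j) = 0 := by
      intro j
      have e : ω (∑ i : Fin 6, b.repr x i • b i) (b j) = ∑ i : Fin 6, b.repr x i * ω (b i) (b j) := by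
        simp only [map_sum, LinearMap.sum_apply, map_smul, LinearMap.smul_apply, smul_eq_mul]
      rw [b.sum_repr x] at e
      rw [← e]; exact hx (b j)
    have k0 : b.repr x 0 = 0 := by
      have := key 1
      simpa [Fin.sum_univ_six, hw01, hw21, hw31, hw41, hw51, hAlt] using this
    have k1 : b.repr x 1 = 0 := by
      have := key 0
      simpa [Fin.sum_univ_six, hw10, hw20, hw30, hw40, hw50, hAlt] using this
    have k2 : b.repr x 2 = 0 := by
      have := key 3
      simpa [Fin.sum_univ_six, hw03, hw13, hw23, hw43, hw53, hAlt] using this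
    have k3 : b.repr x 3 = 0 := by
      have := key 2
      simpa [Fin.sum_univ_six, hw02, hw12, hw32, hw42, hw52, hAlt] using this
    have k4 : b.repr x 4 = 0 := by
      have := key 5
      simpa [Fin.sum_univ_six, hw05, hw15, hw25, hw35, hw45, hAlt] using this
    have k5 : b.repr x 5 = 0 := by
      have := key 4
      simpa [Fin.sum_univ_six, hw04, hw14, hw24, hw34, hw54, hAlt] using this
    refine b.ext_elem fun i => ?_
    simp only [map_zero, Finsupp.zero_apply]
    fin_cases i
    exacts [k0, k1, k2, k3, k4, k5]
  -- (iii) J² = -1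
  have hJJ : ∀ x : L, J (J x) = -x := by
    have hcomp : (J ∘ₗ J : L →ₗ[ℝ] L) = -LinearMap.id := by
      apply b.ext; intro i
      fin_cases i <;> simp [hJ0, hJ1, hJ2, hJ3, hJ4, hJ5]
    intro x
    simpa using LinearMap.congr_fun hcomp x
  -- (iii) Nijenhuis tensor on basis elements
  have keyN : ∀ i j : Fin 6,
      ⁅J (b i), J (b j)⁆ - J ⁅J (b i), b j⁆ - J ⁅b i, J (b j)⁆ - ⁅b i, b j⁆ = 0 := by
    intro i j
    fin_cases i <;> fin_cases j <;>
      simp [hJ0, hJ1, hJ2, hJ3, hJ4, hJ5,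
        hX1Z, hX2Z, hY1Z, hY2Z, h01, h02, h03, h05, h12, h13, h15, h23, h25, h35, h45,
        h10, h20, h30, h50, h21, h31, h51, h32, h52, h53, h54, h40, h41, h42, h43,
        lie_self]
  have stepN : ∀ (i : Fin 6) (y : L),
      ⁅J (b i), J y⁆ - J ⁅J (b i), y⁆ - J ⁅b i, J y⁆ - ⁅b i, y⁆ = 0 := by
    intro i y
    refine Submodule.span_induction
      (p := fun y _ => ⁅J (b i), J y⁆ - J ⁅J (b i), y⁆ - J ⁅b i, J y⁆ - ⁅b i, y⁆ = 0)
      ?_ ?_ ?_ ?_ (hmem y)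
    · rintro _ ⟨j, rfl⟩; exact keyN i j
    · simp
    · intro u v _ _ hu hv
      have e : ⁅J (b i), J (u + v)⁆ - J ⁅J (b i), u + v⁆ - J ⁅b i, J (u + v)⁆ - ⁅b i, u + v⁆
          = (⁅J (b i), J u⁆ - J ⁅J (b i), u⁆ - J ⁅b i, J u⁆ - ⁅b i, u⁆)
            + (⁅J (b i), J v⁆ - J ⁅J (b i), v⁆ - J ⁅b i, J v⁆ - ⁅b i, v⁆) := by
        simp only [map_add, lie_add, add_lie]; abel
      rw [e, hu, hv, add_zero]
    · intro a u _ hu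
      have e : ⁅J (b i), J (a • u)⁆ - J ⁅J (b i), a • u⁆ - J ⁅b i, J (a • u)⁆ - ⁅b i, a • u⁆
          = a • (⁅J (b i), J u⁆ - J ⁅J (b i), u⁆ - J ⁅b i, J u⁆ - ⁅b i, u⁆) := by
        simp only [map_smul, lie_smul, smul_lie, smul_sub]
      rw [e, hu, smul_zero]
  have nijenhuis : ∀ x y : L, ⁅J x, J y⁆ - J ⁅J x, y⁆ - J ⁅x, J y⁆ - ⁅x, y⁆ = 0 := by
    intro x y
    refine Submodule.span_induction
      (p := fun x _ => ⁅J x, J y⁆ - J ⁅J x, y⁆ - J ⁅x, J y⁆ - ⁅x, y⁆ = 0)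
      ?_ ?_ ?_ ?_ (hmem x)
    · rintro _ ⟨i, rfl⟩; exact stepN i y
    · simp
    · intro u v _ _ hu hv
      have e : ⁅J (u + v), J y⁆ - J ⁅J (u + v), y⁆ - J ⁅u + v, J y⁆ - ⁅u + v, y⁆
          = (⁅J u, J y⁆ - J ⁅J u, y⁆ - J ⁅u, J y⁆ - ⁅u, y⁆)
            + (⁅J v, J y⁆ - J ⁅J v, y⁆ - J ⁅v, J y⁆ - ⁅v, y⁆) := by
        simp only [map_add, lie_add, add_lie]; abel
      rw [e, hu, hv, add_zero]
    · intro a u _ hu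
      have e : ⁅J (a • u), J y⁆ - J ⁅J (a • u), y⁆ - J ⁅a • u, J y⁆ - ⁅a • u, y⁆
          = a • (⁅J u, J y⁆ - J ⁅J u, y⁆ - J ⁅u, J y⁆ - ⁅u, y⁆) := by
        simp only [map_smul, lie_smul, smul_lie, smul_sub]
      rw [e, hu, smul_zero]
  -- (iv) J-invariance of ω
  have keyI : ∀ i j : Fin 6, ω (J (b i)) (J (b j)) = ω (b i) (b j) := by
    intro i j
    fin_cases i <;> fin_cases j <;>
      simp [hJ0, hJ1, hJ2, hJ3, hJ4, hJ5, hAlt,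
        hw01, hw23, hw45, hw02, hw03, hw04, hw05, hw12, hw13, hw14, hw15,
        hw24, hw25, hw34, hw35, hw10, hw32, hw54, hw20, hw30, hw40, hw50, hw21, hw31,
        hw41, hw51, hw42, hw52, hw43, hw53]
  have stepI : ∀ (i : Fin 6) (y : L), ω (J (b i)) (J y) = ω (b i) y := by
    intro i y
    refine Submodule.span_induction
      (p := fun y _ => ω (J (b i)) (J y) = ω (b i) y) ?_ ?_ ?_ ?_ (hmem y)
    · rintro _ ⟨j, rfl⟩; exact keyI i j
    · simp
    · intro u v _ _ hu hv
      simp only [map_add] at *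
      linarith
    · intro a u _ hu
      simp only [map_smul, smul_eq_mul]
      linear_combination a * hu
  have inv : ∀ x y : L, ω (J x) (J y) = ω x y := by
    intro x y
    refine Submodule.span_induction
      (p := fun x _ => ω (J x) (J y) = ω x y) ?_ ?_ ?_ ?_ (hmem x)
    · rintro _ ⟨i, rfl⟩; exact stepI i y
    · simp
    · intro u v _ _ hu hv
      simp only [map_add, LinearMap.add_apply] at *
      linarith
    · intro a u _ hu
      simp only [map_smul, LinearMap.smul_apply, smul_eq_mul]
      linear_combination a * hu
  exact ⟨closed, nondeg, ⟨hJJ, nijenhuis⟩, inv⟩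
end
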